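/- Let W be a symmetric matrix with nonnegative entries, η₁, η₂ > 0, 0 < v₁ < 1 < v₂, and f_i : ℝ → ℝ twice differentiable with ψ_i(x) = f_i'(x_i). Along any solution x(t) of ẋ_i = −∑_j W_{ij}(η₁ sgn^{v₁}(ψ_i − ψ_j) + η₂ sgn^{v₂}(ψ_i − ψ_j)), the total cost F(x) = ∑_i f_i(x_i) satisfies d/dt F(x(t)) = −(η₁/2) ∑_{i,j} W_{ij}|ψ_i − ψ_j|^{v₁+1} − (η₂/2) ∑_{i,j} W_{ij}|ψ_i − ψ_j|^{v₂+1} ≤ 0. -/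

import Mathlib

noncomputable def sgnPow (v x : ℝ) : ℝ := if x = 0 then 0 else x * |x| ^ (v - 1)


lemma sgnPow_neg (v x : ℝ) : sgnPow v (-x) = - sgnPow v x := by
  unfold sgnPow
  rcases eq_or_ne x 0 with h | h
  · simp [h]
  · rw [if_neg (neg_ne_zero.mpr h), if_neg h, abs_neg]; ring

lemma mul_sgnPow (v x : ℝ) (hv : 0 < v) : x * sgnPow v x = |x| ^ (v + 1) := by
  unfold sgnPow
  rcases eq_or_ne x 0 with h | h
  · simp [h]
    rw [Real.zero_rpow (by linarith)]
  · simp [h]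
    have hx : (0:ℝ) < |x| := abs_pos.mpr h
    rw [show x * (x * |x| ^ (v - 1)) = (x * x) * |x| ^ (v - 1) by ring,
      show x * x = |x| ^ (2:ℝ) by rw [Real.rpow_two]; rcases abs_cases x with ⟨h1,_⟩|⟨h1,_⟩ <;> nlinarith,
      ← Real.rpow_add hx]
    ring_nf

lemma sym_sum (n : ℕ) (W : Matrix (Fin n) (Fin n) ℝ) (hWsym : ∀ i j, W i j = W j i)
    (p : Fin n → ℝ) (v : ℝ) (hv : 0 < v) :
    ∑ i, ∑ j, W i j * (p i * sgnPow v (p i - p j)) =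
      (1/2) * ∑ i, ∑ j, W i j * |p i - p j| ^ (v + 1) := by
  have key : (∑ i, ∑ j, W i j * (p i * sgnPow v (p i - p j))) +
      (∑ i, ∑ j, W i j * (p i * sgnPow v (p i - p j))) =
      ∑ i, ∑ j, W i j * |p i - p j| ^ (v + 1) := by
    nth_rewrite 2 [Finset.sum_comm]
    rw [← Finset.sum_add_distrib]
    refine Finset.sum_congr rfl fun i _ => ?_
    rw [← Finset.sum_add_distrib]
    refine Finset.sum_congr rfl fun j _ => ?_
    rw [hWsym j i, show p j - p i = -(p i - p j) by ring, sgnPow_neg,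
      ← mul_sgnPow v (p i - p j) hv]
    ring
  linarith

theorem lyapunov_derivative (n : ℕ) (W : Matrix (Fin n) (Fin n) ℝ)
    (hWsym : ∀ i j, W i j = W j i) (hWnn : ∀ i j, 0 ≤ W i j)
    (η₁ η₂ v₁ v₂ : ℝ) (hη₁ : 0 < η₁) (hη₂ : 0 < η₂)
    (hv₁ : 0 < v₁) (hv₁' : v₁ < 1) (hv₂ : 1 < v₂)
    (f : Fin n → ℝ → ℝ) (hf : ∀ i, ContDiff ℝ 2 (f i))
    (x : ℝ → Fin n → ℝ)
    (ψ : ℝ → Fin n → ℝ) (hψ : ∀ t i, ψ t i = deriv (f i) (x t i))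
    (hode : ∀ t i, HasDerivAt (fun s => x s i)
      (-(∑ j, W i j * (η₁ * sgnPow v₁ (ψ t i - ψ t j) +
                        η₂ * sgnPow v₂ (ψ t i - ψ t j)))) t) :
    ∀ t : ℝ,
      HasDerivAt (fun s => ∑ i, f i (x s i))
        (-(η₁ / 2) * ∑ i, ∑ j, W i j * |ψ t i - ψ t j| ^ (v₁ + 1)
         - (η₂ / 2) * ∑ i, ∑ j, W i j * |ψ t i - ψ t j| ^ (v₂ + 1)) t ∧
      (-(η₁ / 2) * ∑ i, ∑ j, W i j * |ψ t i - ψ t j| ^ (v₁ + 1)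
         - (η₂ / 2) * ∑ i, ∑ j, W i j * |ψ t i - ψ t j| ^ (v₂ + 1)) ≤ 0 := by
  intro t
  have hS1 : 0 ≤ ∑ i, ∑ j, W i j * |ψ t i - ψ t j| ^ (v₁ + 1) :=
    Finset.sum_nonneg fun i _ => Finset.sum_nonneg fun j _ =>
      mul_nonneg (hWnn i j) (Real.rpow_nonneg (abs_nonneg _) _)
  have hS2 : 0 ≤ ∑ i, ∑ j, W i j * |ψ t i - ψ t j| ^ (v₂ + 1) :=
    Finset.sum_nonneg fun i _ => Finset.sum_nonneg fun j _ =>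
      mul_nonneg (hWnn i j) (Real.rpow_nonneg (abs_nonneg _) _)
  constructor
  · have hderiv : ∀ i, HasDerivAt (fun s => f i (x s i))
        (ψ t i * -(∑ j, W i j * (η₁ * sgnPow v₁ (ψ t i - ψ t j) +
            η₂ * sgnPow v₂ (ψ t i - ψ t j)))) t := by
      intro i
      have h1 : HasDerivAt (f i) (deriv (f i) (x t i)) (x t i) :=
        (((hf i).differentiable (by norm_num)) (x t i)).hasDerivAt
      have h2 := h1.comp t (hode t i)
      rw [← hψ t i] at h2
      exact h2
    have hsum := HasDerivAt.sum (fun i (_ : i ∈ Finset.univ) => hderiv i)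
    have halg :
        (∑ i, ψ t i * -(∑ j, W i j * (η₁ * sgnPow v₁ (ψ t i - ψ t j) +
            η₂ * sgnPow v₂ (ψ t i - ψ t j)))) =
        -(η₁ / 2) * ∑ i, ∑ j, W i j * |ψ t i - ψ t j| ^ (v₁ + 1)
         - (η₂ / 2) * ∑ i, ∑ j, W i j * |ψ t i - ψ t j| ^ (v₂ + 1) := by
      have e1 := sym_sum n W hWsym (ψ t) v₁ hv₁
      have e2 := sym_sum n W hWsym (ψ t) v₂ (by linarith)
      have step : (∑ i, ψ t i * -(∑ j, W i j * (η₁ * sgnPow v₁ (ψ t i - ψ t j) +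
            η₂ * sgnPow v₂ (ψ t i - ψ t j)))) =
          ∑ i, ∑ j, ((-η₁) * (W i j * (ψ t i * sgnPow v₁ (ψ t i - ψ t j)))
            - η₂ * (W i j * (ψ t i * sgnPow v₂ (ψ t i - ψ t j)))) := by
        refine Finset.sum_congr rfl fun i _ => ?_
        rw [mul_neg, Finset.mul_sum, ← Finset.sum_neg_distrib]
        exact Finset.sum_congr rfl fun j _ => by ring
      rw [step]
      simp only [Finset.sum_sub_distrib, ← Finset.mul_sum]
      rw [e1, e2]
      ring
    rw [halg] at hsum
    rw [show (∑ i, fun s => f i (x s i)) = (fun s => ∑ i, f i (x s i)) from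
      funext fun s => Finset.sum_apply s _ _] at hsum
    exact hsum
  · nlinarith
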